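/- In any algebra satisfying Σ, for all p, a, b: (p·a)∘(p∘b) = p∘(a∘b). -/
import Mathlib

/-- In any algebra satisfying Σ: (p·a)∘(p∘b) = p∘(a∘b). -/
theorem sigma_mul_comp_comp_eq {P : Type*} (mul comp : P → P → P)
    (hassoc : ∀ a b c, comp a (comp b c) = comp (comp a b) c)
    (hmix : ∀ a b c, mul (comp a b) c = mul a (mul b c))
    (hdist : ∀ a b c, mul a (comp b c) = comp (mul a b) (mul a c))
    (habs : ∀ a b, comp a b = comp (mul a b) a) :
    ∀ p a b, comp (mul p a) (comp p b) = comp p (comp a b) := by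
  intro p a b
  rw [habs p b, hassoc, ← hdist, ← habs]
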